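/- Let k, d be positive integers with k dividing d and set t = d/k. There exists n₀ = n₀(d,k) such that for every n ≥ n₀, every k-wise (n−d)-union family 𝒜 of subsets of [n] satisfies |𝒜| ≤ Σ_{i=0}^{t} C(n, i). -/

import Mathlib

/-- A set `Y` is shattered by the family `F` if every subset of `Y`
is the trace of some member of `F` on `Y`. -/
def Shatters {α : Type*} [DecidableEq α] (F : Finset (Finset α)) (Y : Finset α) : Prop :=
  ∀ T ⊆ Y, ∃ S ∈ F, S ∩ Y = T

/-- The VC dimension of a family: the largest cardinality of a shattered set. -/
noncomputable def vcDim {α : Type*} [DecidableEq α] (F : Finset (Finset α)) : ℕ :=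
  sSup {m | ∃ Y : Finset α, Shatters F Y ∧ Y.card = m}

/-- `S₁ △ S₂ △ ⋯ △ S_k` for a `k`-tuple of sets. -/
def symmDiffAll {α : Type*} [DecidableEq α] {k : ℕ} (f : Fin k → Finset α) : Finset α :=
  (List.ofFn f).foldr symmDiff ∅

/-- The `k`-fold symmetric difference family `△𝒜^k`. -/
def symmDiffFam {α : Type*} [DecidableEq α] (k : ℕ) (A : Finset (Finset α)) :
    Finset (Finset α) :=
  (Fintype.piFinset fun _ : Fin k => A).image symmDiffAll

/-- The family `𝒜₁ △ ⋯ △ 𝒜ₖ`. -/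
def symmDiffFamMulti {α : Type*} [DecidableEq α] {k : ℕ} (A : Fin k → Finset (Finset α)) :
    Finset (Finset α) :=
  (Fintype.piFinset A).image symmDiffAll

/-- A family is `k`-wise `(n-d)`-union if any `k` of its members have union of size `≤ d`. -/
def KwiseUnion {α : Type*} [DecidableEq α] (k d : ℕ) (A : Finset (Finset α)) : Prop :=
  ∀ f : Fin k → Finset α, (∀ i, f i ∈ A) → (Finset.univ.sup f).card ≤ d

/-- The `i`-compression of a family. -/
def compress {α : Type*} [DecidableEq α] (i : α) (A : Finset (Finset α)) :
    Finset (Finset α) :=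
  A.image fun S => if S ∈ A ∧ S.erase i ∈ A then S else S.erase i

/-- The `(i,j)`-shift of a family. -/
def shiftIJ {α : Type*} [DecidableEq α] (i j : α) (A : Finset (Finset α)) :
    Finset (Finset α) :=
  A.image fun S => if i ∉ S ∧ j ∈ S ∧ insert i (S.erase j) ∉ A then insert i (S.erase j) else S

/-- `p(n,k,d)`: the maximum size of a `k`-wise `(n-d)`-union family on `[n]`. -/
noncomputable def pMax (n k d : ℕ) : ℕ :=
  sSup {m | ∃ F : Finset (Finset (Fin n)), KwiseUnion k d F ∧ F.card = m}


lemma countSmall {n m : ℕ} (A : Finset (Finset (Fin n))) (h : ∀ S ∈ A, S.card ≤ m) :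
    A.card ≤ ∑ i ∈ Finset.range (m + 1), n.choose i := by
  have hsub : A ⊆ (Finset.range (m+1)).biUnion
      (fun i => Finset.powersetCard i (Finset.univ : Finset (Fin n))) := by
    intro S hS
    refine Finset.mem_biUnion.2 ⟨S.card, Finset.mem_range.2 (Nat.lt_succ_of_le (h S hS)), ?_⟩
    exact Finset.mem_powersetCard.2 ⟨Finset.subset_univ _, rfl⟩
  calc A.card ≤ _ := Finset.card_le_card hsub
    _ ≤ ∑ i ∈ Finset.range (m+1), (Finset.powersetCard i (Finset.univ : Finset (Fin n))).card :=
        Finset.card_biUnion_le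
    _ = ∑ i ∈ Finset.range (m+1), n.choose i := by
        simp [Finset.card_powersetCard]

lemma chooseMono {n i j : ℕ} (hij : i ≤ j) (hj : j ≤ n / 2) : n.choose i ≤ n.choose j := by
  induction j with
  | zero => simp [Nat.le_zero.1 hij]
  | succ m ih =>
    rcases Nat.lt_or_ge i (m+1) with h | h
    · exact le_trans (ih (by omega) (by omega))
        (Nat.choose_le_succ_of_lt_half_left (by omega))
    · have : i = m + 1 := by omega
      simp [this]

lemma supCons {n k : ℕ} (S : Finset (Fin n)) (f : Fin k → Finset (Fin n)) :
    Finset.univ.sup (Fin.cons S f : Fin (k+1) → Finset (Fin n)) = S ⊔ Finset.univ.sup f := by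
  apply le_antisymm
  · apply Finset.sup_le
    intro j _
    refine Fin.cases ?_ ?_ j
    · simp
    · intro i; simp only [Fin.cons_succ]
      exact le_sup_of_le_right (Finset.le_sup (Finset.mem_univ i))
  · apply sup_le
    · exact Finset.le_sup (f := Fin.cons S f) (Finset.mem_univ (0 : Fin (k+1)))
    · apply Finset.sup_le
      intro i _
      exact Finset.le_sup (f := Fin.cons S f) (Finset.mem_univ i.succ)

lemma mainAux (t k : ℕ) (hk : 1 ≤ k) :
    ∃ n₀ : ℕ, ∀ n : ℕ, n₀ ≤ n → ∀ A : Finset (Finset (Fin n)),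
      KwiseUnion k (k*t) A → A.card ≤ ∑ i ∈ Finset.range (t+1), n.choose i := by
  induction k, hk using Nat.le_induction with
  | base =>
    refine ⟨0, fun n _ A hKU => ?_⟩
    apply countSmall
    intro S hS
    have := hKU (fun _ => S) (fun _ => hS)
    rwa [Finset.sup_const Finset.univ_nonempty, one_mul] at this
  | succ k hk ih =>
    obtain ⟨n₁, hn₁⟩ := ih
    refine ⟨n₁ + 2^((k+1)*t)*t*t + 2*t + 2, fun n hn A hKU => ?_⟩
    by_cases hex : ∃ f : Fin k → Finset (Fin n),
        (∀ i, f i ∈ A) ∧ k*t < (Finset.univ.sup f).card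
    · obtain ⟨f, hfA, hWcard⟩ := hex
      set W := Finset.univ.sup f with hWdef
      have hWle : W.card ≤ (k+1)*t := by
        have h1 := hKU (Fin.cons (f ⟨0, by omega⟩) f)
          (fun j => Fin.cases (hfA _) (fun i => hfA i) j)
        rwa [supCons, sup_eq_right.2 (Finset.le_sup (Finset.mem_univ _))] at h1
      have ht : 1 ≤ t := by
        rcases Nat.eq_zero_or_pos t with h | h
        · subst h; simp only [Nat.mul_zero] at hWcard hWle; omega
        · exact h
      have hmul : (k+1)*t = k*t + t := by ring
      have hsdiff : ∀ S ∈ A, (S \ W).card ≤ t - 1 := by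
        intro S hS
        have h1 := hKU (Fin.cons S f) (fun j => Fin.cases hS hfA j)
        rw [supCons, Finset.sup_eq_union, ← hWdef] at h1
        have h2 := Finset.card_sdiff_add_card S W
        omega
      set B := (Finset.univ : Finset (Finset (Fin n))).filter (fun X => X.card ≤ t - 1) with hBdef
      have hinj : A.card ≤ (W.powerset ×ˢ B).card := by
        apply Finset.card_le_card_of_injOn (fun S => (S ∩ W, S \ W))
        · intro S hS
          refine Finset.mem_product.2 ⟨Finset.mem_powerset.2 Finset.inter_subset_right, ?_⟩
          exact Finset.mem_filter.2 ⟨Finset.mem_univ _, hsdiff S hS⟩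
        · intro S1 _ S2 _ h
          have h3 : S1 ∩ W = S2 ∩ W := congrArg Prod.fst h
          have h4 : S1 \ W = S2 \ W := congrArg Prod.snd h
          calc S1 = S1 \ W ∪ S1 ∩ W := (Finset.sdiff_union_inter S1 W).symm
            _ = S2 \ W ∪ S2 ∩ W := by rw [h3, h4]
            _ = S2 := Finset.sdiff_union_inter S2 W
      have hB : B.card ≤ ∑ i ∈ Finset.range t, n.choose i := by
        have := countSmall B (fun S hS => (Finset.mem_filter.1 hS).2)
        have ht1 : t - 1 + 1 = t := by omega
        rwa [ht1] at this
      have hhalf : t - 1 ≤ n / 2 := by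
        have h2t : 2*t + 2 ≤ n := by omega
        omega
      have hsum : ∑ i ∈ Finset.range t, n.choose i ≤ t * n.choose (t-1) := by
        have := Finset.sum_le_card_nsmul (Finset.range t) (fun i => n.choose i) (n.choose (t-1))
          (fun i hi => chooseMono (by have := Finset.mem_range.1 hi; omega) hhalf)
        simpa [Finset.card_range, mul_comm] using this
      have hfin : 2^((k+1)*t) * (t * n.choose (t-1)) ≤ n.choose t := by
        have h5 : n.choose t * t = n.choose (t-1) * (n - (t-1)) := by
          have h := Nat.choose_succ_right_eq n (t-1)
          have ht1 : t - 1 + 1 = t := by omega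
          rwa [ht1] at h
        have h6 : 2^((k+1)*t)*t*t ≤ n - (t-1) := by
          have := hn
          omega
        apply Nat.le_of_mul_le_mul_right _ (by omega : 0 < t)
        calc 2^((k+1)*t) * (t * n.choose (t-1)) * t
            = n.choose (t-1) * (2^((k+1)*t)*t*t) := by ring
          _ ≤ n.choose (t-1) * (n - (t-1)) := Nat.mul_le_mul_left _ h6
          _ = n.choose t * t := h5.symm
      calc A.card ≤ (W.powerset ×ˢ B).card := hinj
        _ = 2 ^ W.card * B.card := by rw [Finset.card_product, Finset.card_powerset]
        _ ≤ 2^((k+1)*t) * (t * n.choose (t-1)) := by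
            exact Nat.mul_le_mul (Nat.pow_le_pow_right (by norm_num) hWle)
              (le_trans hB hsum)
        _ ≤ n.choose t := hfin
        _ ≤ ∑ i ∈ Finset.range (t+1), n.choose i := by
            exact Finset.single_le_sum (fun i _ => Nat.zero_le _)
              (Finset.mem_range.2 (by omega))
    · push_neg at hex
      exact hn₁ n (by omega) A (fun f hf => hex f hf)

/-- for `k ∣ d`, `t = d/k`, there is `n₀(d,k)` such that for `n ≥ n₀` every
`k`-wise `(n−d)`-union family on `[n]` has size at most `∑_{i=0}^{t} C(n,i)`. -/
theorem statement8 (k d : ℕ) (hk : 0 < k) (hd : 0 < d) (hkd : k ∣ d) :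
    ∃ n₀ : ℕ, ∀ n : ℕ, n₀ ≤ n → ∀ A : Finset (Finset (Fin n)),
      KwiseUnion k d A → A.card ≤ ∑ i ∈ Finset.range (d / k + 1), n.choose i := by
  obtain ⟨t, rfl⟩ := hkd
  have htq : k * t / k = t := Nat.mul_div_cancel_left t hk
  obtain ⟨n₀, h⟩ := mainAux t k hk
  refine ⟨n₀, fun n hn A hA => ?_⟩
  rw [htq]
  exact h n hn A hA
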